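/- Let Ω be a compact Hausdorff topological space equipped with its Borel σ-algebra and a probability measure μ that is inner regular with respect to compact sets and faithful (μ(U) > 0 for every nonempty open U). Let f : Ω → ℂ be a bounded measurable function, ω₀ ∈ Ω, and c ∈ ℂ such that f(ω) → c as ω → ω₀ (i.e. f tends to c along the neighborhood filter of ω₀). Then for every ultrafilter 𝒰 on the measure algebra of (Ω, μ) with 𝒟_{ω₀} ⊆ 𝒰, one has lim_𝒰 f = c. (This is the scalar-valued case of Theorem III.4.) -/

import Mathlib

open MeasureTheory

/-- An *ultrafilter on the measure algebra* of `(Ω, μ)`: a collection of measurable,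
non-null subsets of `Ω`, closed under intersection and under almost-everywhere
enlargement, containing every measurable set or its complement. -/
structure IsMeasureUltrafilter {Ω : Type*} [MeasurableSpace Ω] (μ : Measure Ω)
    (U : Set (Set Ω)) : Prop where
  measurableSet_of_mem : ∀ F ∈ U, MeasurableSet F
  not_null : ∀ F ∈ U, μ F ≠ 0
  inter_mem : ∀ F ∈ U, ∀ G ∈ U, F ∩ G ∈ U
  mem_of_ae_subset : ∀ F ∈ U, ∀ G : Set Ω, MeasurableSet G → μ (F \ G) = 0 → G ∈ U
  mem_or_compl_mem : ∀ F : Set Ω, MeasurableSet F → F ∈ U ∨ Fᶜ ∈ U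

/-- `UltraLim μ U f a` means `lim_U f = a`: for every `ε > 0` there is `F ∈ U` such that
all averages of `f` over measurable subsets of `F` of finite positive measure are within
`ε` of `a`. -/
def UltraLim {Ω : Type*} [MeasurableSpace Ω] (μ : Measure Ω) (U : Set (Set Ω))
    (f : Ω → ℂ) (a : ℂ) : Prop :=
  ∀ ε : ℝ, 0 < ε → ∃ F ∈ U, ∀ X : Set Ω, X ⊆ F → MeasurableSet X →
    0 < μ X → μ X < ⊤ → ‖(μ X).toReal⁻¹ • ∫ x in X, f x ∂μ - a‖ < ε

/-- A measure is *semifinite* if every measurable set of infinite measure contains a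
measurable subset of finite positive measure. -/
def Semifinite {Ω : Type*} [MeasurableSpace Ω] (μ : Measure Ω) : Prop :=
  ∀ E : Set Ω, MeasurableSet E → μ E = ⊤ →
    ∃ F : Set Ω, F ⊆ E ∧ MeasurableSet F ∧ 0 < μ F ∧ μ F < ⊤

universe u

/-- A measure is *decomposable* if there is a partition of `Ω` into measurable sets of
finite measure which detects measurability and along which `μ` sums. -/
def Decomposable {Ω : Type u} [MeasurableSpace Ω] (μ : Measure Ω) : Prop :=
  ∃ (ι : Type u) (P : ι → Set Ω),
    (∀ i, MeasurableSet (P i)) ∧ (∀ i, μ (P i) < ⊤) ∧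
    (Pairwise fun i j => Disjoint (P i) (P j)) ∧
    (⋃ i, P i) = Set.univ ∧
    (∀ E : Set Ω, (∀ i, MeasurableSet (E ∩ P i)) → MeasurableSet E) ∧
    (∀ E : Set Ω, MeasurableSet E → μ E = ∑' i, μ (E ∩ P i))

/-- Theorem III.4, scalar-valued case. If a bounded measurable function
`f` on a compact Hausdorff space with a faithful inner-regular Borel probability measure
converges to `c` along the neighborhood filter of `ω₀`, then `lim_𝒰 f = c` for every
ultrafilter `𝒰` on the measure algebra containing `𝒟_{ω₀}`. -/
theorem ultraLim_of_tendsto_nhds {Ω : Type u} [TopologicalSpace Ω]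
    [CompactSpace Ω] [T2Space Ω] [MeasurableSpace Ω] [BorelSpace Ω]
    (μ : Measure Ω) [IsProbabilityMeasure μ] [μ.InnerRegular]
    (hfaithful : ∀ V : Set Ω, IsOpen V → V.Nonempty → 0 < μ V)
    (f : Ω → ℂ) (hf : Measurable f) (C : ℝ) (hC : ∀ x, ‖f x‖ ≤ C)
    (ω₀ : Ω) (c : ℂ) (hconv : Filter.Tendsto f (nhds ω₀) (nhds c))
    (U : Set (Set Ω)) (hU : IsMeasureUltrafilter μ U)
    (hD : {X : Set Ω | MeasurableSet X ∧ ∃ V : Set Ω, IsOpen V ∧ ω₀ ∈ V ∧ μ (V \ X) = 0}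
      ⊆ U) :
    UltraLim μ U f c := by
  intro ε hε
  have h2 : ∀ᶠ x in nhds ω₀, ‖f x - c‖ < ε / 2 := by
    have := Metric.tendsto_nhds.mp hconv (ε / 2) (by linarith)
    filter_upwards [this] with x hx
    simpa [dist_eq_norm] using hx
  rcases eventually_nhds_iff.mp h2 with ⟨V, hV, hVopen, hω₀⟩
  refine ⟨V, hD ⟨hVopen.measurableSet, V, hVopen, hω₀, by simp⟩, ?_⟩
  intro X hXV hXm hX0 hXtop
  have hint : IntegrableOn f X μ := by
    refine Integrable.mono' (g := fun _ => C) ?_ hf.aestronglyMeasurable ?_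
    · exact integrable_const_iff.mpr (Or.inr inferInstance)
    · exact Filter.Eventually.of_forall fun x => hC x
  have hintc : IntegrableOn (fun _ => c) X μ := integrable_const_iff.mpr (Or.inr inferInstance)
  have hXr : 0 < (μ X).toReal := ENNReal.toReal_pos hX0.ne' hXtop.ne
  have hcint : ∫ x in X, (c : ℂ) ∂μ = (μ X).toReal • c := by
    simp [setIntegral_const]
    exact Or.inl rfl
  have hkey : (μ X).toReal⁻¹ • ∫ x in X, f x ∂μ - c
      = (μ X).toReal⁻¹ • ∫ x in X, (f x - c) ∂μ := by
    rw [integral_sub hint hintc, hcint, smul_sub, smul_smul,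
      inv_mul_cancel₀ hXr.ne', one_smul]
  rw [hkey]
  have hbound : ‖∫ x in X, (f x - c) ∂μ‖ ≤ (ε / 2) * (μ X).toReal := by
    refine norm_setIntegral_le_of_norm_le_const hXtop ?_
    · intro x hx
      exact le_of_lt (hV x (hXV hx))
  calc ‖(μ X).toReal⁻¹ • ∫ x in X, (f x - c) ∂μ‖
      = (μ X).toReal⁻¹ * ‖∫ x in X, (f x - c) ∂μ‖ := by
        rw [norm_smul]; simp [abs_of_pos (inv_pos.mpr hXr)]
    _ ≤ (μ X).toReal⁻¹ * ((ε / 2) * (μ X).toReal) := by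
        exact mul_le_mul_of_nonneg_left hbound (le_of_lt (inv_pos.mpr hXr))
    _ = ε / 2 := by field_simp
    _ < ε := by linarith
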